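/- Let s₁, d₁, s₂, d₂ be nonnegative integers with s₁ + d₁ = s₂ + d₂ ≥ 2, {s₁,d₁} ≠ {s₂,d₂}, and s₁ ≥ 2. Then there exists a finite nonempty set A of nonnegative integers such that |s₁A - d₁A| = |s₂A - d₂A| + 1. -/

import Mathlib

open Finset Pointwise

/-- `itSum k A` is the k-fold sumset A + A + ⋯ + A (with `itSum 0 A = {0}`). -/
def itSum : ℕ → Finset ℤ → Finset ℤ
  | 0, _ => {0}
  | n+1, A => A + itSum n A

/-- `gDiff s d A = sA - dA`. -/
def gDiff (s d : ℕ) (A : Finset ℤ) : Finset ℤ := itSum s A - itSum d A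

lemma itSum_succ (n : ℕ) (A : Finset ℤ) : itSum (n+1) A = A + itSum n A := rfl

lemma zero_mem_itSum {Q : Finset ℤ} (h0 : (0:ℤ) ∈ Q) (j : ℕ) : (0:ℤ) ∈ itSum j Q := by
  induction j with
  | zero => simp [itSum]
  | succ n ih => exact Finset.mem_add.2 ⟨0, h0, 0, ih, by ring⟩

lemma itSum_bounds {Q : Finset ℤ} {T : ℤ} (hQ : Q ⊆ Icc 0 T) :
    ∀ (j : ℕ) {q : ℤ}, q ∈ itSum j Q → 0 ≤ q ∧ q ≤ (j : ℤ) * T := by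
  intro j
  induction j with
  | zero => intro q hq; simp [itSum] at hq; simp [hq]
  | succ n ih =>
    intro q hq
    rcases Finset.mem_add.1 hq with ⟨a, ha, b, hb, rfl⟩
    have h1 := mem_Icc.1 (hQ ha)
    have h2 := ih hb
    have h3 : ((n:ℤ)+1) * T = (n:ℤ) * T + T := by ring
    push_cast
    omega

lemma itSum_interval (j : ℕ) : itSum j ({0,1} : Finset ℤ) = Icc 0 (j:ℤ) := by
  induction j with
  | zero => simp [itSum]
  | succ n ih =>
    rw [itSum_succ, ih]
    ext x
    simp only [Finset.mem_add, mem_Icc, mem_insert, mem_singleton]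
    push_cast
    constructor
    · rintro ⟨y, hy, z, hz, rfl⟩; rcases hy with rfl | rfl <;> omega
    · intro h
      by_cases hx : x ≤ (n:ℤ)
      · exact ⟨0, Or.inl rfl, x, by omega, by ring⟩
      · exact ⟨1, Or.inr rfl, x - 1, by omega, by ring⟩

/-- The fringe construction `{0} ∪ [T+1, n-T-1] ∪ (n - Q)`. -/
noncomputable def fringeA (Q : Finset ℤ) (T n : ℤ) : Finset ℤ :=
  insert 0 (Icc (T+1) (n-T-1)) ∪ Q.image (fun q => n - q)

lemma mem_fringeA {Q : Finset ℤ} {T n x : ℤ} :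
    x ∈ fringeA Q T n ↔ x = 0 ∨ (T+1 ≤ x ∧ x ≤ n - T - 1) ∨ ∃ q ∈ Q, n - q = x := by
  simp [fringeA, mem_Icc, or_assoc]

lemma add_singleton_zero (S : Finset ℤ) : S + {0} = S := by
  ext x; simp [Finset.mem_add]

theorem itSum_fringeA {Q : Finset ℤ} {T n : ℤ} (hT : 1 ≤ T) (hn : 10*(T+1) ≤ n)
    (hQ : Q ⊆ Icc 0 T) (h0 : (0:ℤ) ∈ Q) :
    ∀ s : ℕ, itSum s (fringeA Q T n) = fringeA (itSum s Q) T ((s:ℤ) * n) := by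
  intro s
  induction s with
  | zero =>
    rw [show ((0:ℕ):ℤ) * n = 0 by simp]
    ext x
    simp only [itSum, mem_fringeA, Finset.mem_singleton]
    constructor
    · rintro rfl; exact Or.inl rfl
    · rintro (rfl | h | ⟨q, hq, rfl⟩)
      · rfl
      · omega
      · omega
  | succ s ih =>
    rcases Nat.eq_zero_or_pos s with rfl | hs
    · rw [itSum_succ, itSum, add_singleton_zero]
      ext x
      simp only [mem_fringeA]
      constructor
      · rintro (rfl | h | ⟨q, hq, rfl⟩)
        · exact Or.inl rfl
        · push_cast; omega
        · exact Or.inr (Or.inr ⟨q, Finset.mem_add.2 ⟨q, hq, 0, zero_mem_itSum h0 0, by ring⟩,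
            by push_cast; ring⟩)
      · rintro (rfl | h | ⟨q, hq, rfl⟩)
        · exact Or.inl rfl
        · push_cast at h; omega
        · rcases Finset.mem_add.1 hq with ⟨a, ha, b, hb, rfl⟩
          simp only [itSum, Finset.mem_singleton] at hb
          subst hb
          exact Or.inr (Or.inr ⟨a + 0, by simpa using ha, by push_cast; ring⟩)
    · -- main step, s ≥ 1
      rw [itSum_succ, ih]
      rw [show ((((s+1) : ℕ)) : ℤ) * n = (s:ℤ)*n + n from by push_cast; ring]
      have hSt0 : (0:ℤ) ≤ (s:ℤ)*T := by positivity
      have hkey : (s:ℤ)*T + (n - T) ≤ (s:ℤ)*n := by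
        have h1 : (1:ℤ) ≤ (s:ℤ) := by exact_mod_cast hs
        nlinarith
      ext x
      simp only [Finset.mem_add, mem_fringeA]
      constructor
      · rintro ⟨a, ha, y, hy, rfl⟩
        rcases ha with rfl | ha | ⟨q', hq', rfl⟩ <;>
          rcases hy with rfl | hy | ⟨q, hq, rfl⟩
        · exact Or.inl (by ring)
        · exact Or.inr (Or.inl (by omega))
        · have hb := itSum_bounds hQ s hq
          exact Or.inr (Or.inl (by omega))
        · exact Or.inr (Or.inl (by omega))
        · exact Or.inr (Or.inl (by omega))
        · have hb := itSum_bounds hQ s hq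
          have h1 := mem_Icc.1 (hQ (show _ ∈ Q from ‹_›))
          exact Or.inr (Or.inl (by omega))
        · have h1 := mem_Icc.1 (hQ hq')
          exact Or.inr (Or.inl (by omega))
        · have h1 := mem_Icc.1 (hQ hq')
          exact Or.inr (Or.inl (by omega))
        · have h1 := mem_Icc.1 (hQ hq')
          have hb := itSum_bounds hQ s hq
          refine Or.inr (Or.inr ⟨q' + q, Finset.mem_add.2 ⟨q', hq', q, hq, rfl⟩, by ring⟩)
      · rintro (rfl | hx | ⟨q, hq, rfl⟩)
        · exact ⟨0, Or.inl rfl, 0, Or.inl rfl, by ring⟩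
        · by_cases h1 : x ≤ n - T - 1
          · exact ⟨x, Or.inr (Or.inl (by omega)), 0, Or.inl rfl, by ring⟩
          · by_cases h2 : x ≤ (s:ℤ)*n + n - 2*T - 2
            · refine ⟨max (T+1) (x - ((s:ℤ)*n - T - 1)), Or.inr (Or.inl (by omega)),
                x - max (T+1) (x - ((s:ℤ)*n - T - 1)), Or.inr (Or.inl (by omega)), by ring⟩
            · refine ⟨n - 0, Or.inr (Or.inr ⟨0, h0, rfl⟩), x - n,
                Or.inr (Or.inl (by omega)), by ring⟩
        · rcases Finset.mem_add.1 hq with ⟨q', hq', b, hb, rfl⟩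
          exact ⟨n - q', Or.inr (Or.inr ⟨q', hq', rfl⟩), (s:ℤ)*n - b,
            Or.inr (Or.inr ⟨b, hb, rfl⟩), by ring⟩

lemma snfact {T n : ℤ} (s : ℕ) (hT : 1 ≤ T) (hn : 10*(T+1) ≤ n) :
    ((s:ℤ) = 0 ∧ (s:ℤ)*n = 0 ∧ (s:ℤ)*T = 0) ∨
      ((s:ℤ)*T + (n-T) ≤ (s:ℤ)*n ∧ n ≤ (s:ℤ)*n ∧ 0 ≤ (s:ℤ)*T) := by
  cases s with
  | zero => left; simp
  | succ m =>
    right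
    have hm : (0:ℤ) ≤ (m:ℤ) := by positivity
    have h1 : (1:ℤ) ≤ ((m:ℤ)+1) := by omega
    push_cast
    refine ⟨by nlinarith, by nlinarith, by nlinarith⟩

theorem gDiff_fringeA {Q : Finset ℤ} {T n : ℤ} (hT : 1 ≤ T) (hn : 10*(T+1) ≤ n)
    (hQ : Q ⊆ Icc 0 T) (h0 : (0:ℤ) ∈ Q) (s d : ℕ) :
    gDiff s d (fringeA Q T n) =
      (itSum d Q).image (fun q => q - (d:ℤ)*n) ∪
        Icc (-((d:ℤ)*n)+T+1) ((s:ℤ)*n-T-1) ∪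
        (itSum s Q).image (fun q => (s:ℤ)*n - q) := by
  have hS := itSum_fringeA hT hn hQ h0 s
  have hD := itSum_fringeA hT hn hQ h0 d
  have hsf := snfact (T := T) (n := n) s hT hn
  have hdf := snfact (T := T) (n := n) d hT hn
  rw [gDiff, hS, hD]
  ext x
  simp only [Finset.mem_sub, mem_fringeA, Finset.mem_union, Finset.mem_image, mem_Icc]
  constructor
  · rintro ⟨y, hy, z, hz, rfl⟩
    rcases hy with rfl | hy | ⟨q, hq, rfl⟩ <;>
      rcases hz with rfl | hz | ⟨q2, hq2, rfl⟩
    · rcases hdf with ⟨hd0, hdn, hdt⟩ | ⟨hd1, hd2, hd3⟩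
      · exact Or.inl (Or.inl ⟨0, zero_mem_itSum h0 d, by omega⟩)
      · rcases hsf with ⟨hs0, hsn, hst⟩ | ⟨hs1, hs2, hs3⟩
        · exact Or.inr ⟨0, zero_mem_itSum h0 s, by omega⟩
        · exact Or.inl (Or.inr (by omega))
    · exact Or.inl (Or.inr (by omega))
    · have hb := itSum_bounds hQ d hq2
      exact Or.inl (Or.inl ⟨q2, hq2, by ring⟩)
    · exact Or.inl (Or.inr (by omega))
    · exact Or.inl (Or.inr (by omega))
    · have hb := itSum_bounds hQ d hq2
      exact Or.inl (Or.inr (by omega))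
    · have hb := itSum_bounds hQ s hq
      exact Or.inr ⟨q, hq, by ring⟩
    · have hb := itSum_bounds hQ s hq
      exact Or.inl (Or.inr (by omega))
    · have hb := itSum_bounds hQ s hq
      have hb2 := itSum_bounds hQ d hq2
      rcases hsf with ⟨hs0, hsn, hst⟩ | ⟨hs1, hs2, hs3⟩
      · exact Or.inl (Or.inl ⟨q2, hq2, by omega⟩)
      · rcases hdf with ⟨hd0, hdn, hdt⟩ | ⟨hd1, hd2, hd3⟩
        · exact Or.inr ⟨q, hq, by omega⟩
        · exact Or.inl (Or.inr (by omega))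
  · rintro ((⟨q, hq, rfl⟩ | hx) | ⟨q, hq, rfl⟩)
    · exact ⟨0, Or.inl rfl, (d:ℤ)*n - q, Or.inr (Or.inr ⟨q, hq, by ring⟩), by ring⟩
    · by_cases hx1 : x ≤ -T-1
      · exact ⟨0, Or.inl rfl, -x, Or.inr (Or.inl (by omega)), by ring⟩
      · by_cases hx2 : T+1 ≤ x
        · exact ⟨x, Or.inr (Or.inl (by omega)), 0, Or.inl rfl, by ring⟩
        · refine ⟨x + (2*T+2), Or.inr (Or.inl (by omega)), 2*T+2,
            Or.inr (Or.inl (by omega)), by ring⟩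
    · exact ⟨(s:ℤ)*n - q, Or.inr (Or.inr ⟨q, hq, rfl⟩), 0, Or.inl rfl, by ring⟩

theorem card_gDiff_fringeA {Q : Finset ℤ} {T n : ℤ} (hT : 1 ≤ T) (hn : 10*(T+1) ≤ n)
    (hQ : Q ⊆ Icc 0 T) (h0 : (0:ℤ) ∈ Q) (s d : ℕ) (hsd : 1 ≤ s + d) :
    (gDiff s d (fringeA Q T n)).card =
      ((itSum d Q) ∩ Icc 0 T).card + ((s:ℤ)*n + (d:ℤ)*n - 2*T - 1).toNat
        + ((itSum s Q) ∩ Icc 0 T).card := by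
  have hsf := snfact (T := T) (n := n) s hT hn
  have hdf := snfact (T := T) (n := n) d hT hn
  have hsd' : ¬ ((s:ℤ) = 0 ∧ (d:ℤ) = 0) := by
    rintro ⟨h1, h2⟩
    have e1 : s = 0 := by exact_mod_cast h1
    have e2 : d = 0 := by exact_mod_cast h2
    omega
  rw [gDiff_fringeA hT hn hQ h0 s d]
  have hXeq : (itSum d Q).image (fun q => q - (d:ℤ)*n) ∪
        Icc (-((d:ℤ)*n)+T+1) ((s:ℤ)*n-T-1) ∪
        (itSum s Q).image (fun q => (s:ℤ)*n - q) =
      ((itSum d Q) ∩ Icc 0 T).image (fun q => q - (d:ℤ)*n) ∪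
        Icc (-((d:ℤ)*n)+T+1) ((s:ℤ)*n-T-1) ∪
        ((itSum s Q) ∩ Icc 0 T).image (fun q => (s:ℤ)*n - q) := by
    ext x
    simp only [Finset.mem_union, Finset.mem_image, mem_Icc, Finset.mem_inter]
    constructor
    · rintro ((⟨q, hq, rfl⟩ | hx) | ⟨q, hq, rfl⟩)
      · have hb := itSum_bounds hQ d hq
        by_cases hqT : q ≤ T
        · exact Or.inl (Or.inl ⟨q, ⟨hq, by omega⟩, rfl⟩)
        · exact Or.inl (Or.inr (by omega))
      · exact Or.inl (Or.inr hx)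
      · have hb := itSum_bounds hQ s hq
        by_cases hqT : q ≤ T
        · exact Or.inr ⟨q, ⟨hq, by omega⟩, rfl⟩
        · exact Or.inl (Or.inr (by omega))
    · rintro ((⟨q, ⟨hq, _⟩, rfl⟩ | hx) | ⟨q, ⟨hq, _⟩, rfl⟩)
      · exact Or.inl (Or.inl ⟨q, hq, rfl⟩)
      · exact Or.inl (Or.inr hx)
      · exact Or.inr ⟨q, hq, rfl⟩
  rw [hXeq]
  have hd1 : Disjoint (((itSum d Q) ∩ Icc 0 T).image (fun q => q - (d:ℤ)*n))
      (Icc (-((d:ℤ)*n)+T+1) ((s:ℤ)*n-T-1)) := by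
    rw [Finset.disjoint_left]
    rintro a ha hb
    simp only [Finset.mem_image, Finset.mem_inter, mem_Icc] at ha hb
    obtain ⟨q, ⟨hq, hq2⟩, rfl⟩ := ha
    omega
  have hd2 : Disjoint (((itSum d Q) ∩ Icc 0 T).image (fun q => q - (d:ℤ)*n) ∪
        Icc (-((d:ℤ)*n)+T+1) ((s:ℤ)*n-T-1))
      (((itSum s Q) ∩ Icc 0 T).image (fun q => (s:ℤ)*n - q)) := by
    rw [Finset.disjoint_left]
    rintro a ha hb
    simp only [Finset.mem_union, Finset.mem_image, Finset.mem_inter, mem_Icc] at ha hb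
    obtain ⟨q, ⟨hq, hq2⟩, rfl⟩ := hb
    rcases ha with ⟨q2, ⟨hq3, hq4⟩, he⟩ | ha <;> omega
  rw [Finset.card_union_of_disjoint hd2, Finset.card_union_of_disjoint hd1]
  rw [Finset.card_image_of_injective _
      (sub_left_injective : Function.Injective (fun q : ℤ => q - (d:ℤ)*n)),
    Finset.card_image_of_injective _
      (sub_right_injective : Function.Injective (fun q : ℤ => (s:ℤ)*n - q)),
    Int.card_Icc]
  have e : ((s:ℤ)*n-T-1 + 1 - (-((d:ℤ)*n)+T+1)) = ((s:ℤ)*n + (d:ℤ)*n - 2*T - 1) := by ring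
  rw [e]

noncomputable def blocks (x j : ℕ) : Finset ℤ :=
  (range (j+1)).biUnion (fun i => Icc ((x:ℤ)*i) ((x:ℤ)*i + min ((j:ℤ) - i) ((x:ℤ) - 1)))

lemma mem_blocks {x j : ℕ} {v : ℤ} :
    v ∈ blocks x j ↔
      ∃ i : ℕ, i < j+1 ∧ (x:ℤ)*i ≤ v ∧ v ≤ (x:ℤ)*i + min ((j:ℤ) - i) ((x:ℤ) - 1) := by
  simp [blocks, mem_biUnion, mem_Icc, mem_range, and_assoc]

lemma itSum_three (x : ℕ) (hx : 2 ≤ x) (j : ℕ) :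
    itSum j ({0, 1, (x:ℤ)} : Finset ℤ) = blocks x j := by
  have hx' : (2:ℤ) ≤ (x:ℤ) := by exact_mod_cast hx
  induction j with
  | zero =>
    ext v
    simp only [itSum, Finset.mem_singleton, mem_blocks]
    constructor
    · rintro rfl
      refine ⟨0, by omega, by simp, ?_⟩
      simp only [Nat.cast_zero, mul_zero, CharP.cast_eq_zero, sub_zero, zero_add]
      omega
    · rintro ⟨i, hi, h1, h2⟩
      have hi0 : i = 0 := by omega
      subst hi0
      simp only [Nat.cast_zero, mul_zero, CharP.cast_eq_zero, sub_zero, zero_add] at h1 h2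
      omega
  | succ j ih =>
    rw [itSum_succ, ih]
    ext v
    simp only [Finset.mem_add, mem_blocks, mem_insert, Finset.mem_singleton]
    constructor
    · rintro ⟨q, hq, w, ⟨i, hi, hw1, hw2⟩, rfl⟩
      have e : (x:ℤ)*((i+1:ℕ):ℤ) = (x:ℤ)*(i:ℤ) + (x:ℤ) := by push_cast; ring
      have e2 : ((j+1:ℕ):ℤ) = (j:ℤ) + 1 := by push_cast; ring
      rcases hq with rfl | rfl | rfl
      · exact ⟨i, by omega, by omega, by omega⟩
      · by_cases hc : 1 + w ≤ (x:ℤ)*(i:ℤ) + min (((j+1:ℕ):ℤ) - (i:ℤ)) ((x:ℤ) - 1)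
        · exact ⟨i, by omega, by omega, by omega⟩
        · exact ⟨i+1, by omega, by omega, by omega⟩
      · exact ⟨i+1, by omega, by omega, by omega⟩
    · rintro ⟨i, hi, h1, h2⟩
      have e2 : ((j+1:ℕ):ℤ) = (j:ℤ) + 1 := by push_cast; ring
      by_cases hij : i = j+1
      · subst hij
        have e : (x:ℤ)*((j+1:ℕ):ℤ) = (x:ℤ)*(j:ℤ) + (x:ℤ) := by push_cast; ring
        refine ⟨x, by tauto, (x:ℤ)*(j:ℤ), ⟨j, by omega, le_refl _, ?_⟩, by omega⟩
        omega
      · have e : (x:ℤ)*((i+1:ℕ):ℤ) = (x:ℤ)*(i:ℤ) + (x:ℤ) := by push_cast; ring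
        by_cases hc : v ≤ (x:ℤ)*(i:ℤ) + min ((j:ℤ) - (i:ℤ)) ((x:ℤ) - 1)
        · exact ⟨0, by tauto, v, ⟨i, by omega, by omega, hc⟩, by ring⟩
        · exact ⟨1, by tauto, v - 1, ⟨i, by omega, by omega, by omega⟩, by ring⟩

lemma mul_step (x i k : ℕ) (h : i < k) : (x:ℤ)*(i:ℤ) + x ≤ (x:ℤ)*(k:ℤ) := by
  have h1 : ((i:ℤ)+1) ≤ (k:ℤ) := by exact_mod_cast h
  have h2 : (x:ℤ) * ((i:ℤ)+1) ≤ (x:ℤ)*(k:ℤ) :=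
    mul_le_mul_of_nonneg_left h1 (by positivity)
  nlinarith

/-- partial sums of min -/
def Gs (y j : ℕ) : ℕ := ∑ i ∈ range (j+1), (min i y + 1)

lemma Gs_succ (y j : ℕ) : Gs y (j+1) = Gs y j + (min (j+1) y + 1) := by
  simp [Gs, sum_range_succ]

lemma blocks_card (x j : ℕ) (hx : 2 ≤ x) : (blocks x j).card = Gs (x-1) j := by
  have hx' : (2:ℤ) ≤ (x:ℤ) := by exact_mod_cast hx
  have hdisj : ∀ i ∈ range (j+1), ∀ k ∈ range (j+1), i ≠ k →
      Disjoint (Icc ((x:ℤ)*i) ((x:ℤ)*i + min ((j:ℤ) - i) ((x:ℤ) - 1)))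
        (Icc ((x:ℤ)*k) ((x:ℤ)*k + min ((j:ℤ) - k) ((x:ℤ) - 1))) := by
    intro i hi k hk hik
    rw [Finset.disjoint_left]
    intro a ha hb
    simp only [mem_Icc] at ha hb
    rcases Nat.lt_or_ge i k with h | h
    · have := mul_step x i k h
      omega
    · have hki : k < i := by omega
      have := mul_step x k i (by omega)
      omega
  rw [blocks, Finset.card_biUnion hdisj]
  have hcc : ∀ i ∈ range (j+1),
      (Icc ((x:ℤ)*i) ((x:ℤ)*i + min ((j:ℤ) - i) ((x:ℤ) - 1))).card = min (j-i) (x-1) + 1 := by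
    intro i hi
    simp only [mem_range] at hi
    rw [Int.card_Icc]
    have e : ((x:ℤ)*i + min ((j:ℤ) - i) ((x:ℤ) - 1) + 1 - (x:ℤ)*i)
        = min ((j:ℤ) - i) ((x:ℤ) - 1) + 1 := by ring
    rw [e]
    omega
  rw [Finset.sum_congr rfl hcc, Gs]
  have hrefl := Finset.sum_range_reflect (fun i => min i (x-1) + 1) (j+1)
  simp only [Nat.add_sub_cancel] at hrefl
  rw [← hrefl]

lemma blocks_subset (x j : ℕ) (hx : 2 ≤ x) : blocks x j ⊆ Icc 0 ((x:ℤ)*(j:ℤ)) := by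
  have hx' : (2:ℤ) ≤ (x:ℤ) := by exact_mod_cast hx
  intro v hv
  rw [mem_blocks] at hv
  obtain ⟨i, hi, h1, h2⟩ := hv
  rcases Nat.lt_or_ge i j with h | h
  · have := mul_step x i j h
    have h0 : (0:ℤ) ≤ (x:ℤ)*(i:ℤ) := by positivity
    simp only [mem_Icc]
    omega
  · have hij : i = j := by omega
    subst hij
    simp only [mem_Icc]
    have h0 : (0:ℤ) ≤ (x:ℤ)*(i:ℤ) := by positivity
    omega

lemma hard_id (u v : ℕ) (hv : u+1 ≤ v) :
    ∀ δ : ℕ, 1 ≤ δ → Gs (u+2) (v+δ) + Gs (u+2) u = Gs (u+2) v + Gs (u+2) (u+δ) + 1 := by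
  intro δ hδ
  induction δ with
  | zero => omega
  | succ k ih =>
    rcases Nat.eq_zero_or_pos k with rfl | hk
    · simp only [Nat.zero_add]
      have e1 : Gs (u+2) (v+1) = Gs (u+2) v + (min (v+1) (u+2) + 1) := Gs_succ _ _
      have e2 : Gs (u+2) (u+1) = Gs (u+2) u + (min (u+1) (u+2) + 1) := Gs_succ _ _
      omega
    · have ih' := ih hk
      have e1 : Gs (u+2) (v+k+1) = Gs (u+2) (v+k) + (min (v+k+1) (u+2) + 1) := Gs_succ _ _
      have e2 : Gs (u+2) (u+k+1) = Gs (u+2) (u+k) + (min (u+k+1) (u+2) + 1) := Gs_succ _ _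
      have ev : v + (k+1) = (v+k)+1 := by omega
      have eu : u + (k+1) = (u+k)+1 := by omega
      rw [ev, eu]
      omega

lemma hard_count_id (s₁ d₁ s₂ d₂ : ℕ) (hsum : s₁ + d₁ = s₂ + d₂)
    (hlt : min s₁ d₁ < min s₂ d₂) :
    Gs (min s₁ d₁ + 2) s₁ + Gs (min s₁ d₁ + 2) d₁
      = Gs (min s₁ d₁ + 2) s₂ + Gs (min s₁ d₁ + 2) d₂ + 1 := by
  have key := hard_id (min s₁ d₁) (max s₂ d₂) (by omega) (min s₂ d₂ - min s₁ d₁) (by omega)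
  rw [show max s₂ d₂ + (min s₂ d₂ - min s₁ d₁) = max s₁ d₁ from by omega,
    show min s₁ d₁ + (min s₂ d₂ - min s₁ d₁) = min s₂ d₂ from by omega] at key
  have hsym : ∀ a b : ℕ, Gs (min s₁ d₁ + 2) a + Gs (min s₁ d₁ + 2) b
      = Gs (min s₁ d₁ + 2) (min a b) + Gs (min s₁ d₁ + 2) (max a b) := by
    intro a b
    rcases le_total a b with hab | hab
    · rw [min_eq_left hab, max_eq_right hab]
    · rw [min_eq_right hab, max_eq_left hab]; omega
  have g1 := hsym s₁ d₁
  have g2 := hsym s₂ d₂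
  omega

theorem stmt_9 (s₁ d₁ s₂ d₂ : ℕ)
    (hsum : s₁ + d₁ = s₂ + d₂) (h2 : 2 ≤ s₁ + d₁) (hs₁ : 2 ≤ s₁)
    (hne : ¬ ((s₁ = s₂ ∧ d₁ = d₂) ∨ (s₁ = d₂ ∧ d₁ = s₂))) :
    ∃ A : Finset ℤ, A.Nonempty ∧ (∀ a ∈ A, 0 ≤ a) ∧
      (gDiff s₁ d₁ A).card = (gDiff s₂ d₂ A).card + 1 := by
  have hmin : min s₁ d₁ ≠ min s₂ d₂ := by omega
  rcases Nat.lt_or_ge (min s₂ d₂) (min s₁ d₁) with hlt | hge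
  · -- easy case: pair 2 is more extreme
    set t : ℕ := min s₂ d₂ + 1 with ht_def
    set T : ℤ := (t : ℤ) with hT_def
    set n : ℤ := 10*(T+1) with hn_def
    have hT : 1 ≤ T := by simp [hT_def]; omega
    have hn : 10*(T+1) ≤ n := le_refl _
    have hQ : ({0,1} : Finset ℤ) ⊆ Icc 0 T := by
      intro a ha
      simp only [mem_insert, Finset.mem_singleton] at ha
      simp only [mem_Icc]
      rcases ha with rfl | rfl <;> omega
    have h0 : (0:ℤ) ∈ ({0,1} : Finset ℤ) := by simp
    refine ⟨fringeA {0,1} T n, ⟨0, mem_fringeA.2 (Or.inl rfl)⟩, ?_, ?_⟩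
    · intro a ha
      rcases mem_fringeA.1 ha with rfl | h | ⟨q, hq, rfl⟩
      · exact le_refl 0
      · omega
      · have := mem_Icc.1 (hQ hq)
        omega
    · have hc1 := card_gDiff_fringeA hT hn hQ h0 s₁ d₁ (by omega)
      have hc2 := card_gDiff_fringeA hT hn hQ h0 s₂ d₂ (by omega)
      have hcount : ∀ j : ℕ, ((itSum j ({0,1} : Finset ℤ)) ∩ Icc 0 T).card = min j t + 1 := by
        intro j
        rw [itSum_interval]
        have he : Icc (0:ℤ) (j:ℤ) ∩ Icc 0 T = Icc 0 ((min j t : ℕ) : ℤ) := by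
          ext y
          simp only [Finset.mem_inter, mem_Icc]
          have : ((min j t : ℕ) : ℤ) = min (j:ℤ) (t:ℤ) := by push_cast; simp
          omega
        rw [he, Int.card_Icc]
        omega
      rw [hc1, hc2, hcount, hcount, hcount, hcount]
      have hcast : ((s₁:ℤ) + d₁) = ((s₂:ℤ) + d₂) := by exact_mod_cast hsum
      have hKeq : (s₁:ℤ)*n + (d₁:ℤ)*n = (s₂:ℤ)*n + (d₂:ℤ)*n := by linear_combination n * hcast
      rw [hKeq]
      omega
  · -- hard case: pair 1 is more extreme
    have hlt : min s₁ d₁ < min s₂ d₂ := by omega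
    obtain ⟨x, hx_def⟩ : ∃ x, x = min s₁ d₁ + 3 := ⟨_, rfl⟩
    obtain ⟨t, ht_def⟩ : ∃ t, t = x * (s₁ + d₁) := ⟨_, rfl⟩
    obtain ⟨T, hT_def⟩ : ∃ T : ℤ, T = (t : ℤ) := ⟨_, rfl⟩
    obtain ⟨n, hn_def⟩ : ∃ n : ℤ, n = 10*(T+1) := ⟨_, rfl⟩
    have hx2 : 2 ≤ x := by omega
    have hxh : x ≤ t := by
      rw [ht_def]
      calc x = x * 1 := by omega
      _ ≤ x * (s₁ + d₁) := Nat.mul_le_mul_left x (by omega)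
    have hT : 1 ≤ T := by
      have : 1 ≤ t := by omega
      rw [hT_def]; exact_mod_cast this
    have hn : 10*(T+1) ≤ n := le_of_eq hn_def.symm
    have hQ : ({0, 1, (x:ℤ)} : Finset ℤ) ⊆ Icc 0 T := by
      intro a ha
      simp only [mem_insert, Finset.mem_singleton] at ha
      simp only [mem_Icc]
      have hxT : (x:ℤ) ≤ T := by rw [hT_def]; exact_mod_cast hxh
      have hx0 : (0:ℤ) ≤ (x:ℤ) := by positivity
      rcases ha with rfl | rfl | rfl <;> omega
    have h0 : (0:ℤ) ∈ ({0, 1, (x:ℤ)} : Finset ℤ) := by simp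
    refine ⟨fringeA {0, 1, (x:ℤ)} T n, ⟨0, mem_fringeA.2 (Or.inl rfl)⟩, ?_, ?_⟩
    · intro a ha
      rcases mem_fringeA.1 ha with rfl | hmem | ⟨q, hq, rfl⟩
      · exact le_refl 0
      · omega
      · have := mem_Icc.1 (hQ hq)
        omega
    · have hc1 := card_gDiff_fringeA hT hn hQ h0 s₁ d₁ (by omega)
      have hc2 := card_gDiff_fringeA hT hn hQ h0 s₂ d₂ (by omega)
      have hcount : ∀ j : ℕ, j ≤ s₁ + d₁ →
          ((itSum j ({0, 1, (x:ℤ)} : Finset ℤ)) ∩ Icc 0 T).card = Gs (x-1) j := by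
        intro j hj
        rw [itSum_three x hx2 j]
        have hsub : blocks x j ⊆ Icc 0 T := by
          refine (blocks_subset x j hx2).trans ?_
          apply Finset.Icc_subset_Icc (le_refl _)
          have hm : x * j ≤ t := by
            rw [ht_def]; exact Nat.mul_le_mul_left x hj
          rw [hT_def]
          calc (x:ℤ)*(j:ℤ) = ((x*j : ℕ) : ℤ) := by push_cast; ring
          _ ≤ (t : ℤ) := by exact_mod_cast hm
        rw [Finset.inter_eq_left.2 hsub]
        exact blocks_card x j hx2
      rw [hc1, hc2, hcount s₁ (by omega), hcount d₁ (by omega),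
        hcount s₂ (by omega), hcount d₂ (by omega)]
      have hcast : ((s₁:ℤ) + d₁) = ((s₂:ℤ) + d₂) := by exact_mod_cast hsum
      have hKeq : (s₁:ℤ)*n + (d₁:ℤ)*n = (s₂:ℤ)*n + (d₂:ℤ)*n := by linear_combination n * hcast
      rw [hKeq, show x - 1 = min s₁ d₁ + 2 from by omega]
      have hid := hard_count_id s₁ d₁ s₂ d₂ hsum hlt
      omega
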